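/- Let Y = {u₁,…,u_p} and Z = {v₁,…,v_q} be finite sets of points in ℝ^n and let w ∈ ℝ^n. Assume relint(conv Y) ∩ relint(conv Z) ≠ ∅ and relint(conv(Y ∪ {w})) ∩ relint(conv Z) ≠ ∅. Then one of the points of Y ∪ Z can be removed while w is included into Y so that the convex hulls of the updated sets still intersect: there exists an index i₀ such that conv((Y ∖ {u_{i₀}}) ∪ {w}) ∩ conv(Z) ≠ ∅, or there exists an index j₀ such that conv(Y ∪ {w}) ∩ conv(Z ∖ {v_{j₀}}) ≠ ∅. -/

import Mathlib

open Set

set_option maxHeartbeats 1000000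

variable {n : ℕ}

/-- Workhorse: membership in the intrinsic interior via metric balls in the affine span. -/
lemma mem_intrinsicInterior_iff_ball (s : Set (Fin n → ℝ)) (x : Fin n → ℝ) :
    x ∈ intrinsicInterior ℝ s ↔ x ∈ affineSpan ℝ s ∧
      ∃ ε > 0, ∀ z : Fin n → ℝ, z ∈ affineSpan ℝ s → dist z x < ε → z ∈ s := by
  rw [mem_intrinsicInterior]
  constructor
  · rintro ⟨y, hy, rfl⟩
    rw [mem_interior_iff_mem_nhds, Metric.mem_nhds_iff] at hy
    obtain ⟨ε, hε, hball⟩ := hy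
    refine ⟨y.2, ε, hε, fun z hz hd => ?_⟩
    have : (⟨z, hz⟩ : affineSpan ℝ s) ∈ Metric.ball y ε := by
      rw [Metric.mem_ball, Subtype.dist_eq]; exact hd
    exact hball this
  · rintro ⟨hx, ε, hε, h⟩
    refine ⟨⟨x, hx⟩, ?_, rfl⟩
    rw [mem_interior_iff_mem_nhds, Metric.mem_nhds_iff]
    refine ⟨ε, hε, fun z hz => ?_⟩
    rw [Metric.mem_ball, Subtype.dist_eq] at hz
    exact h z z.2 hz

/-- From a point of the intrinsic interior one can move a little bit away from any
point of the set, staying inside. -/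
lemma exists_step {s : Set (Fin n → ℝ)} {x b : Fin n → ℝ}
    (hx : x ∈ intrinsicInterior ℝ s) (hb : b ∈ s) :
    ∃ ε : ℝ, 0 < ε ∧ x + ε • (x - b) ∈ s := by
  obtain ⟨hxs, ε, hε, h⟩ := (mem_intrinsicInterior_iff_ball s x).1 hx
  have hxmem : x ∈ s := intrinsicInterior_subset hx
  set δ : ℝ := ε / (2 * (‖x - b‖ + 1)) with hδdef
  have hδ : 0 < δ := by positivity
  refine ⟨δ, hδ, ?_⟩
  have hdir : x - b ∈ (affineSpan ℝ s).direction :=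
    AffineSubspace.vsub_mem_direction (subset_affineSpan ℝ s hxmem) (subset_affineSpan ℝ s hb)
  have hz : x + δ • (x - b) ∈ affineSpan ℝ s := by
    have := AffineSubspace.vadd_mem_of_mem_direction
      (Submodule.smul_mem _ δ hdir) hxs
    simpa [vadd_eq_add, add_comm] using this
  refine h _ hz ?_
  have : dist (x + δ • (x - b)) x = δ * ‖x - b‖ := by
    rw [dist_eq_norm, add_sub_cancel_left, norm_smul, Real.norm_eq_abs, abs_of_pos hδ]
  rw [this, hδdef]
  have h1 : 0 ≤ ‖x - b‖ := norm_nonneg _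
  rw [div_mul_eq_mul_div, div_lt_iff₀ (by positivity)]
  nlinarith


lemma ray_exit {S S' : Set (Fin n → ℝ)} (hS : S.Finite) (hS' : S'.Finite)
    {a b : Fin n → ℝ} (ha : a ∈ convexHull ℝ S ∩ convexHull ℝ S')
    (hb : b ∈ convexHull ℝ S ∩ convexHull ℝ S') (hab : a ≠ b) :
    ∃ t : ℝ, 0 ≤ t ∧ (a + t • (a - b)) ∈ convexHull ℝ S ∩ convexHull ℝ S' ∧
      ((a + t • (a - b)) ∉ intrinsicInterior ℝ (convexHull ℝ S) ∨
       (a + t • (a - b)) ∉ intrinsicInterior ℝ (convexHull ℝ S')) := by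
  have hC : IsCompact (convexHull ℝ S) := hS.isCompact_convexHull ℝ
  have hC' : IsCompact (convexHull ℝ S') := hS'.isCompact_convexHull ℝ
  have hclosed : IsClosed (convexHull ℝ S ∩ convexHull ℝ S') :=
    hC.isClosed.inter hC'.isClosed
  have hd : (0:ℝ) < ‖a - b‖ := by
    rw [norm_pos_iff]; exact sub_ne_zero.2 hab
  set T : Set ℝ := {t : ℝ | 0 ≤ t ∧ (a + t • (a - b)) ∈ convexHull ℝ S ∩ convexHull ℝ S'}
    with hTdef
  have hT0 : (0:ℝ) ∈ T := by
    constructor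
    · exact le_refl 0
    · simpa using ha
  have hTne : T.Nonempty := ⟨0, hT0⟩
  obtain ⟨R, hR⟩ := hC.isBounded.exists_norm_le (E := Fin n → ℝ)
  have hTbdd : BddAbove T := by
    refine ⟨(R + ‖a‖) / ‖a - b‖, fun t ht => ?_⟩
    obtain ⟨ht0, htm, -⟩ := ht
    have h1 : ‖a + t • (a - b)‖ ≤ R := hR _ htm
    have h2 : t * ‖a - b‖ = ‖(a + t • (a - b)) - a‖ := by
      rw [add_sub_cancel_left, norm_smul, Real.norm_eq_abs, abs_of_nonneg ht0]
    have h3 : ‖(a + t • (a - b)) - a‖ ≤ R + ‖a‖ := by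
      calc ‖(a + t • (a - b)) - a‖ ≤ ‖a + t • (a - b)‖ + ‖a‖ := norm_sub_le _ _
      _ ≤ R + ‖a‖ := by linarith
    rw [le_div_iff₀ hd]
    linarith [h2 ▸ h3]
  have hTclosed : IsClosed T := by
    have hcont : Continuous fun t : ℝ => a + t • (a - b) := by continuity
    have : T = Ici (0:ℝ) ∩ ((fun t : ℝ => a + t • (a - b)) ⁻¹'
        (convexHull ℝ S ∩ convexHull ℝ S')) := rfl
    rw [this]
    exact isClosed_Ici.inter (hclosed.preimage hcont)
  set t₀ : ℝ := sSup T with ht₀def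
  have ht₀T : t₀ ∈ T := hTclosed.csSup_mem hTne hTbdd
  obtain ⟨ht₀0, hmS, hmS'⟩ : 0 ≤ t₀ ∧ (a + t₀ • (a - b)) ∈ convexHull ℝ S ∧
      (a + t₀ • (a - b)) ∈ convexHull ℝ S' := ⟨ht₀T.1, ht₀T.2.1, ht₀T.2.2⟩
  refine ⟨t₀, ht₀0, ⟨hmS, hmS'⟩, ?_⟩
  by_contra hcon
  push_neg at hcon
  obtain ⟨hri, hri'⟩ := hcon
  obtain ⟨hsp, ε₁, hε₁, hball⟩ := (mem_intrinsicInterior_iff_ball _ _).1 hri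
  obtain ⟨hsp', ε₂, hε₂, hball'⟩ := (mem_intrinsicInterior_iff_ball _ _).1 hri'
  set m : Fin n → ℝ := a + t₀ • (a - b) with hmdef
  set δ : ℝ := min ε₁ ε₂ / (2 * ‖a - b‖) with hδdef
  have hδpos : 0 < δ := by positivity
  have hdist : dist (m + δ • (a - b)) m = δ * ‖a - b‖ := by
    rw [dist_eq_norm, add_sub_cancel_left, norm_smul, Real.norm_eq_abs, abs_of_pos hδpos]
  have hlt : δ * ‖a - b‖ < min ε₁ ε₂ := by
    rw [hδdef, div_mul_eq_mul_div, div_lt_iff₀ (by positivity)]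
    nlinarith [lt_min hε₁ hε₂, hδpos]
  have hdir : a - b ∈ (affineSpan ℝ (convexHull ℝ S)).direction :=
    AffineSubspace.vsub_mem_direction (subset_affineSpan ℝ _ ha.1) (subset_affineSpan ℝ _ hb.1)
  have hdir' : a - b ∈ (affineSpan ℝ (convexHull ℝ S')).direction :=
    AffineSubspace.vsub_mem_direction (subset_affineSpan ℝ _ ha.2) (subset_affineSpan ℝ _ hb.2)
  have hzsp : m + δ • (a - b) ∈ affineSpan ℝ (convexHull ℝ S) := by
    have := AffineSubspace.vadd_mem_of_mem_direction (Submodule.smul_mem _ δ hdir) hsp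
    simpa [vadd_eq_add, add_comm] using this
  have hzsp' : m + δ • (a - b) ∈ affineSpan ℝ (convexHull ℝ S') := by
    have := AffineSubspace.vadd_mem_of_mem_direction (Submodule.smul_mem _ δ hdir') hsp'
    simpa [vadd_eq_add, add_comm] using this
  have hzS : m + δ • (a - b) ∈ convexHull ℝ S :=
    hball _ hzsp (by rw [hdist]; exact lt_of_lt_of_le hlt (min_le_left _ _))
  have hzS' : m + δ • (a - b) ∈ convexHull ℝ S' :=
    hball' _ hzsp' (by rw [hdist]; exact lt_of_lt_of_le hlt (min_le_right _ _))
  have heq : m + δ • (a - b) = a + (t₀ + δ) • (a - b) := by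
    rw [hmdef, add_smul]; abel
  have hmemT : t₀ + δ ∈ T := by
    refine ⟨by linarith, ?_, ?_⟩ <;> rw [← heq] <;> assumption
  have := le_csSup hTbdd hmemT
  linarith

/-- A point of the hull of a finite set which is not in the intrinsic interior of the hull
lies in the hull of the set with one point removed. -/
lemma exists_erase_of_notMem_intrinsicInterior {S : Set (Fin n → ℝ)} (hS : S.Finite)
    {m : Fin n → ℝ} (hm : m ∈ convexHull ℝ S)
    (hri : m ∉ intrinsicInterior ℝ (convexHull ℝ S)) :
    ∃ s ∈ S, m ∈ convexHull ℝ (S \ {s}) := by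
  by_contra hcon
  push_neg at hcon
  apply hri
  classical
  set F : Finset (Fin n → ℝ) := hS.toFinset with hFdef
  have hFS : (F : Set (Fin n → ℝ)) = S := hS.coe_toFinset
  have hm' : m ∈ convexHull ℝ (F : Set (Fin n → ℝ)) := by rw [hFS]; exact hm
  rw [Finset.mem_convexHull'] at hm'
  obtain ⟨w, hw0, hw1, hwm⟩ := hm'
  -- all weights are strictly positive
  have hwpos : ∀ s ∈ F, 0 < w s := by
    intro s hsF
    rcases lt_or_eq_of_le (hw0 s hsF) with h | h
    · exact h
    · exfalso
      apply hcon s (by rw [← hFS]; exact hsF)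
      have hsum : ∑ y ∈ F.erase s, w y = 1 := by
        rw [Finset.sum_erase _ h.symm]; exact hw1
      have hsum2 : ∑ y ∈ F.erase s, w y • y = m := by
        rw [Finset.sum_erase _ (by rw [← h]; exact (zero_smul ℝ s))]; exact hwm
      have : m ∈ convexHull ℝ ((F.erase s : Finset (Fin n → ℝ)) : Set (Fin n → ℝ)) := by
        rw [Finset.mem_convexHull']
        exact ⟨w, fun y hy => hw0 y (Finset.mem_of_mem_erase hy), hsum, hsum2⟩
      refine convexHull_mono ?_ this
      intro y hy
      rcases Finset.mem_erase.1 hy with ⟨hne, hyF⟩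
      exact ⟨by rw [← hFS]; exact hyF, hne⟩
  have hFne : F.Nonempty := by
    rcases Finset.eq_empty_or_nonempty F with h | h
    · exfalso; rw [h] at hw1; simp at hw1
    · exact h
  obtain ⟨s₀, hs₀F⟩ := hFne
  have hs₀S : s₀ ∈ S := by rw [← hFS]; exact hs₀F
  -- minimum weight
  set δ : ℝ := F.inf' ⟨s₀, hs₀F⟩ w with hδdef
  have hδpos : 0 < δ := by
    rw [hδdef]
    exact (Finset.lt_inf'_iff _).2 hwpos
  have hδle : ∀ s ∈ F, δ ≤ w s := fun s hs => Finset.inf'_le _ hs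
  -- the linear parametrization of the directions
  set V : Submodule ℝ (Fin n → ℝ) := vectorSpan ℝ S with hVdef
  set Φ : ({x // x ∈ F} → ℝ) →ₗ[ℝ] (Fin n → ℝ) :=
    { toFun := fun c => ∑ s : {x // x ∈ F}, c s • ((s : Fin n → ℝ) - s₀)
      map_add' := by
        intro c d
        simp [add_smul, Finset.sum_add_distrib]
      map_smul' := by
        intro r c
        simp [smul_smul, Finset.smul_sum] } with hΦdef
  have hΦmem : ∀ c, Φ c ∈ V := by
    intro c
    refine Submodule.sum_mem _ fun s _ => Submodule.smul_mem _ _ ?_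
    exact vsub_mem_vectorSpan ℝ (by rw [← hFS]; exact s.2) hs₀S
  set Φ' : ({x // x ∈ F} → ℝ) →ₗ[ℝ] V := Φ.codRestrict V hΦmem with hΦ'def
  have hsurj : LinearMap.range Φ' = ⊤ := by
    rw [LinearMap.range_eq_top]
    intro v
    have hv : (v : Fin n → ℝ) ∈ Submodule.span ℝ ((· -ᵥ s₀) '' S) := by
      rw [← vectorSpan_eq_span_vsub_set_right ℝ hs₀S]
      exact v.2
    have hle : Submodule.span ℝ ((· -ᵥ s₀) '' S) ≤ LinearMap.range Φ := by
      rw [Submodule.span_le]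
      rintro _ ⟨s, hsS, rfl⟩
      have hsF : s ∈ F := by rw [hFdef, Set.Finite.mem_toFinset]; exact hsS
      refine ⟨fun t => if t = ⟨s, hsF⟩ then 1 else 0, ?_⟩
      simp [hΦdef]
    obtain ⟨c, hc⟩ := hle hv
    refine ⟨c, ?_⟩
    apply Subtype.ext
    exact hc
  obtain ⟨ψ, hψ⟩ := Φ'.exists_rightInverse_of_surjective hsurj
  have hψΦ : ∀ v : V, Φ (ψ v) = (v : Fin n → ℝ) := by
    intro v
    have := congrArg (fun f => (f v : Fin n → ℝ)) hψ
    simpa [hΦ'def] using this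
  -- a bound for ψ
  obtain ⟨C, hC0, hψbound⟩ :
      ∃ C : ℝ, 0 ≤ C ∧ ∀ v : V, ∀ s : {x // x ∈ F}, |ψ v s| ≤ C * ‖v‖ := by
    refine ⟨‖LinearMap.toContinuousLinearMap ψ‖, (LinearMap.toContinuousLinearMap ψ).opNorm_nonneg, fun v s => ?_⟩
    calc |ψ v s| = ‖ψ v s‖ := rfl
    _ ≤ ‖ψ v‖ := norm_le_pi_norm (ψ v) s
    _ = ‖LinearMap.toContinuousLinearMap ψ v‖ := rfl
    _ ≤ ‖LinearMap.toContinuousLinearMap ψ‖ * ‖v‖ :=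
        (LinearMap.toContinuousLinearMap ψ).le_opNorm v
  
  -- now prove m is in the intrinsic interior
  rw [mem_intrinsicInterior_iff_ball]
  have hcard0 : (0:ℝ) ≤ (F.card : ℝ) := Nat.cast_nonneg _
  have hden : (0:ℝ) < ((F.card : ℝ) + 1) * (C + 1) + 1 := by
    linarith only [hcard0, hC0, mul_nonneg hcard0 hC0]
  obtain ⟨ε, hεpos, hεeq⟩ :
      ∃ ε : ℝ, 0 < ε ∧ (((F.card : ℝ) + 1) * (C + 1) + 1) * ε = δ :=
    ⟨δ / (((F.card : ℝ) + 1) * (C + 1) + 1), div_pos hδpos hden,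
      by rw [mul_comm, div_mul_cancel₀ _ (ne_of_gt hden)]⟩
  refine ⟨subset_affineSpan ℝ _ hm, ε, hεpos, ?_⟩
  intro z hz hdist
  have hmsp : m ∈ affineSpan ℝ S := by
    have := subset_affineSpan ℝ _ hm
    rwa [affineSpan_convexHull] at this
  have hzsp : z ∈ affineSpan ℝ S := by rwa [affineSpan_convexHull] at hz
  have hvV : z - m ∈ V := by
    rw [hVdef, ← direction_affineSpan]
    exact AffineSubspace.vsub_mem_direction hzsp hmsp
  set v : V := ⟨z - m, hvV⟩ with hvdef
  have hvnorm : ‖v‖ = dist z m := by rw [dist_eq_norm]; rfl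
  set a : (Fin n → ℝ) → ℝ := fun e => if h : e ∈ F then ψ v ⟨e, h⟩ else 0 with hadef
  set Tot : ℝ := ∑ s ∈ F, a s with hTotdef
  set w' : (Fin n → ℝ) → ℝ := fun e => w e + a e - (if e = s₀ then Tot else 0) with hw'def
  have habound : ∀ e ∈ F, |a e| ≤ C * ‖v‖ := by
    intro e he
    rw [hadef]
    simp only [dif_pos he]
    exact hψbound v ⟨e, he⟩
  have hTotbound : |Tot| ≤ (F.card : ℝ) * (C * ‖v‖) := by
    calc |Tot| ≤ ∑ s ∈ F, |a s| := Finset.abs_sum_le_sum_abs _ _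
    _ ≤ ∑ _s ∈ F, C * ‖v‖ := Finset.sum_le_sum habound
    _ = (F.card : ℝ) * (C * ‖v‖) := by rw [Finset.sum_const, nsmul_eq_mul]
  have hvsmall : ((F.card : ℝ) + 1) * (C * ‖v‖) < δ := by
    have h1 : ‖v‖ < ε := by rw [hvnorm]; exact hdist
    have h2 : (0:ℝ) ≤ ‖v‖ := norm_nonneg _
    have h3 : (0:ℝ) ≤ (F.card : ℝ) := Nat.cast_nonneg _
    calc ((F.card : ℝ) + 1) * (C * ‖v‖) = (((F.card : ℝ) + 1) * C) * ‖v‖ := by ring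
    _ ≤ (((F.card : ℝ) + 1) * C) * ε :=
        mul_le_mul_of_nonneg_left h1.le (mul_nonneg (by linarith) hC0)
    _ < (((F.card : ℝ) + 1) * (C + 1) + 1) * ε := by
        have hlt : (((F.card : ℝ) + 1) * C) < ((F.card : ℝ) + 1) * (C + 1) + 1 := by
          linarith only [hcard0]
        exact mul_lt_mul_of_pos_right hlt hεpos
    _ = δ := hεeq
  have hw'pos : ∀ e ∈ F, 0 < w' e := by
    intro e he
    have h1 : δ ≤ w e := hδle e he
    have h2 : |a e| ≤ C * ‖v‖ := habound e he
    have h3 : |(if e = s₀ then Tot else 0)| ≤ (F.card : ℝ) * (C * ‖v‖) := by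
      split
      · exact hTotbound
      · simp only [abs_zero]
        exact mul_nonneg hcard0 (mul_nonneg hC0 (norm_nonneg _))
    have h2' := abs_le.1 h2
    have h3' := abs_le.1 h3
    rw [hw'def]
    simp only
    linarith only [h1, h2'.1, h3'.2, hvsmall]
  have hsum1 : ∑ e ∈ F, w' e = 1 := by
    rw [hw'def]
    simp only
    rw [Finset.sum_sub_distrib, Finset.sum_add_distrib, hw1,
      Finset.sum_ite_eq' F s₀ (fun _ => Tot), if_pos hs₀F, ← hTotdef]
    ring
  have hattach : ∑ e ∈ F, a e • (e - s₀) =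
      ∑ x ∈ F.attach, ψ v x • ((x : Fin n → ℝ) - s₀) := by
    rw [← Finset.sum_attach F (fun e => a e • (e - s₀))]
    refine Finset.sum_congr rfl fun x _ => ?_
    rw [hadef]
    simp only [dif_pos x.2]
  have hΦv : ∑ e ∈ F, a e • (e - s₀) = z - m := by
    rw [hattach]
    have h2 := hψΦ v
    rw [hΦdef] at h2
    change ∑ s : {x // x ∈ F}, ψ v s • ((s : Fin n → ℝ) - s₀) = (v : Fin n → ℝ) at h2
    rw [Finset.univ_eq_attach] at h2
    exact h2
  have hcomb : ∑ e ∈ F, w' e • e = z := by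
    have hexp : ∑ e ∈ F, w' e • e =
        (∑ e ∈ F, w e • e) + ((∑ e ∈ F, a e • e) - Tot • s₀) := by
      rw [hw'def]
      simp only [sub_smul, add_smul, ite_smul, zero_smul]
      rw [Finset.sum_sub_distrib, Finset.sum_add_distrib,
        Finset.sum_ite_eq' F s₀ (fun e => Tot • e), if_pos hs₀F]
      abel
    have hsplit : (∑ e ∈ F, a e • e) - Tot • s₀ = ∑ e ∈ F, a e • (e - s₀) := by
      rw [hTotdef, Finset.sum_smul, ← Finset.sum_sub_distrib]
      refine Finset.sum_congr rfl fun e _ => ?_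
      rw [smul_sub]
    rw [hexp, hsplit, hΦv, hwm]
    abel
  have hzF : z ∈ convexHull ℝ (F : Set (Fin n → ℝ)) :=
    Finset.mem_convexHull'.2 ⟨w', fun e he => (hw'pos e he).le, hsum1, hcomb⟩
  rwa [hFS] at hzF

/-- If `relint(conv Y) ∩ relint(conv Z) ≠ ∅` and `relint(conv(Y ∪ {w})) ∩ relint(conv Z) ≠ ∅`,
then one point of `Y ∪ Z` can be removed while `w` is included into `Y` so that the convex
hulls of the updated sets still intersect. -/
theorem exchange_point_preserves_intersection
    (n p q : ℕ) (hn : 1 ≤ n)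
    (u : Fin p → (Fin n → ℝ)) (v : Fin q → (Fin n → ℝ)) (w : Fin n → ℝ)
    (h1 : (intrinsicInterior ℝ (convexHull ℝ (Set.range u)) ∩
      intrinsicInterior ℝ (convexHull ℝ (Set.range v))).Nonempty)
    (h2 : (intrinsicInterior ℝ (convexHull ℝ (insert w (Set.range u))) ∩
      intrinsicInterior ℝ (convexHull ℝ (Set.range v))).Nonempty) :
    (∃ i₀ : Fin p,
      (convexHull ℝ ((Set.range u \ {u i₀}) ∪ {w}) ∩
        convexHull ℝ (Set.range v)).Nonempty) ∨
    (∃ j₀ : Fin q,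
      (convexHull ℝ (Set.range u ∪ {w}) ∩
        convexHull ℝ (Set.range v \ {v j₀})).Nonempty) := by
  classical
  obtain ⟨y, hyA₀i, hyBi⟩ := h1
  obtain ⟨x, hxAi, hxBi⟩ := h2
  have hufin : (Set.range u).Finite := Set.finite_range u
  have hvfin : (Set.range v).Finite := Set.finite_range v
  have hwufin : (insert w (Set.range u)).Finite := hufin.insert w
  have hyA₀ : y ∈ convexHull ℝ (Set.range u) := intrinsicInterior_subset hyA₀i
  have hyB : y ∈ convexHull ℝ (Set.range v) := intrinsicInterior_subset hyBi
  have hxA : x ∈ convexHull ℝ (insert w (Set.range u)) := intrinsicInterior_subset hxAi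
  have hxB : x ∈ convexHull ℝ (Set.range v) := intrinsicInterior_subset hxBi
  have hUne : (Set.range u).Nonempty := by
    rw [← convexHull_nonempty_iff (𝕜 := ℝ)]
    exact ⟨y, hyA₀⟩
  obtain ⟨a₁, i₁, ha₁⟩ := hUne
  have hUne : (Set.range u).Nonempty := ⟨u i₁, i₁, rfl⟩
  -- helper lemmas to conclude
  have goalLeft : ∀ (i₀ : Fin p) (z : Fin n → ℝ),
      z ∈ convexHull ℝ (insert w (Set.range u \ {u i₀})) →
      z ∈ convexHull ℝ (Set.range v) →
      (∃ i₀ : Fin p,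
        (convexHull ℝ ((Set.range u \ {u i₀}) ∪ {w}) ∩
          convexHull ℝ (Set.range v)).Nonempty) ∨
      (∃ j₀ : Fin q,
        (convexHull ℝ (Set.range u ∪ {w}) ∩
          convexHull ℝ (Set.range v \ {v j₀})).Nonempty) := by
    intro i₀ z hz1 hz2
    exact Or.inl ⟨i₀, z, by rwa [Set.union_singleton], hz2⟩
  have goalRight : ∀ (j₀ : Fin q) (z : Fin n → ℝ),
      z ∈ convexHull ℝ (insert w (Set.range u)) →
      z ∈ convexHull ℝ (Set.range v \ {v j₀}) →
      (∃ i₀ : Fin p,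
        (convexHull ℝ ((Set.range u \ {u i₀}) ∪ {w}) ∩
          convexHull ℝ (Set.range v)).Nonempty) ∨
      (∃ j₀ : Fin q,
        (convexHull ℝ (Set.range u ∪ {w}) ∩
          convexHull ℝ (Set.range v \ {v j₀})).Nonempty) := by
    intro j₀ z hz1 hz2
    exact Or.inr ⟨j₀, z, by rwa [Set.union_singleton], hz2⟩
  by_cases hwB : w ∈ convexHull ℝ (Set.range v)
  · exact goalLeft i₁ w (subset_convexHull ℝ _ (Set.mem_insert _ _)) hwB
  by_cases hxy : x = y
  · -- the degenerate case: x = y, use the "fan" argument toward w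
    subst hxy
    have hwx : w ≠ x := fun h => hwB (h ▸ hxB)
    obtain ⟨ε, hε, hg⟩ := exists_step hxAi (subset_convexHull ℝ _ (Set.mem_insert w _))
    rw [convexHull_insert hUne, mem_convexJoin] at hg
    obtain ⟨w', hw', c, hcA₀, hseg⟩ := hg
    rw [show w' = w from Set.eq_of_mem_singleton hw'] at hseg
    obtain ⟨σ, τ, hσ, hτ, hστ, hgeq⟩ := hseg
    have hτpos : 0 < τ := by
      rcases lt_or_eq_of_le hτ with h | h
      · exact h
      · exfalso
        apply hwx
        have hσ1 : σ = 1 := by linarith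
        have h9 : w = x + ε • (x - w) := by
          rw [← hgeq, hσ1, ← h]; simp
        have h10 : (1 + ε) • (x - w) = 0 := by
          rw [add_smul, one_smul, smul_sub]
          have := congrArg (fun z => z - x + ε • (x - w)) h9
          rw [smul_sub] at this
          abel_nf
          abel_nf at this
          linear_combination (norm := abel) -this
        have h11 : x - w = 0 := by
          rcases smul_eq_zero.1 h10 with h | h
          · exfalso; linarith
          · exact h
        exact (sub_eq_zero.1 h11).symm
    have hτne : τ ≠ 0 := ne_of_gt hτpos
    set lam₁ : ℝ := (σ + ε) / τ with hlam₁def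
    have hlam₁pos : 0 < lam₁ := div_pos (by linarith) hτpos
    have hkey : x + lam₁ • (x - w) = c := by
      have h6 : τ • c = x + ε • (x - w) - σ • w := by
        rw [← hgeq]; abel
      have h5 : τ • (x + lam₁ • (x - w)) = τ • c := by
        rw [h6, hlam₁def]
        match_scalars <;> field_simp <;> linarith
      exact smul_right_injective _ hτne h5
    -- escape along the ray from `w` through `x` inside `conv (range u)`
    have hnxw : (0:ℝ) < ‖x - w‖ := by
      rw [norm_pos_iff]
      exact fun h => hwx (sub_eq_zero.1 h).symm
    have hCu : IsCompact (convexHull ℝ (Set.range u)) := hufin.isCompact_convexHull ℝ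
    obtain ⟨R, hR⟩ := hCu.isBounded.exists_norm_le (E := Fin n → ℝ)
    set Λ : Set ℝ := {l : ℝ | lam₁ ≤ l ∧ x + l • (x - w) ∈ convexHull ℝ (Set.range u)}
      with hΛdef
    have hΛne : Λ.Nonempty := ⟨lam₁, le_refl _, by rw [hkey]; exact hcA₀⟩
    have hΛbdd : BddAbove Λ := by
      refine ⟨(R + ‖x‖) / ‖x - w‖, fun l hl => ?_⟩
      obtain ⟨hl1, hl2⟩ := hl
      have h1 : ‖x + l • (x - w)‖ ≤ R := hR _ hl2
      have h2 : l * ‖x - w‖ = ‖(x + l • (x - w)) - x‖ := by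
        rw [add_sub_cancel_left, norm_smul, Real.norm_eq_abs,
          abs_of_nonneg (le_trans hlam₁pos.le hl1)]
      have h3 : ‖(x + l • (x - w)) - x‖ ≤ R + ‖x‖ := by
        calc ‖(x + l • (x - w)) - x‖ ≤ ‖x + l • (x - w)‖ + ‖x‖ := norm_sub_le _ _
        _ ≤ R + ‖x‖ := by linarith
      rw [le_div_iff₀ hnxw]
      linarith [h2 ▸ h3]
    have hΛclosed : IsClosed Λ := by
      have hcont : Continuous fun l : ℝ => x + l • (x - w) :=
        continuous_const.add (continuous_id.smul continuous_const)
      have hΛeq : Λ = Ici lam₁ ∩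
          ((fun l : ℝ => x + l • (x - w)) ⁻¹' (convexHull ℝ (Set.range u))) := rfl
      rw [hΛeq]
      exact isClosed_Ici.inter (hCu.isClosed.preimage hcont)
    set l₀ : ℝ := sSup Λ with hl₀def
    obtain ⟨hl₀1, hl₀2⟩ : lam₁ ≤ l₀ ∧ x + l₀ • (x - w) ∈ convexHull ℝ (Set.range u) :=
      hΛclosed.csSup_mem hΛne hΛbdd
    have hl₀pos : 0 < l₀ := lt_of_lt_of_le hlam₁pos hl₀1
    have hnotri : x + l₀ • (x - w) ∉ intrinsicInterior ℝ (convexHull ℝ (Set.range u)) := by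
      intro hri2
      obtain ⟨hsp2, ε₂, hε₂, hball2⟩ := (mem_intrinsicInterior_iff_ball _ _).1 hri2
      have hdir : x - w ∈ (affineSpan ℝ (convexHull ℝ (Set.range u))).direction := by
        have h7 : (x + l₀ • (x - w)) - x ∈
            (affineSpan ℝ (convexHull ℝ (Set.range u))).direction :=
          AffineSubspace.vsub_mem_direction (subset_affineSpan ℝ _ hl₀2)
            (subset_affineSpan ℝ _ hyA₀)
        have h8 : x - w = l₀⁻¹ • ((x + l₀ • (x - w)) - x) := by
          rw [add_sub_cancel_left, smul_smul, inv_mul_cancel₀ (ne_of_gt hl₀pos), one_smul]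
        rw [h8]
        exact Submodule.smul_mem _ _ h7
      set δ₂ : ℝ := ε₂ / (2 * (‖x - w‖ + 1)) with hδ₂def
      have hδ₂pos : 0 < δ₂ := by positivity
      have hz : x + (l₀ + δ₂) • (x - w) ∈ convexHull ℝ (Set.range u) := by
        have hzsp : (x + l₀ • (x - w)) + δ₂ • (x - w) ∈
            affineSpan ℝ (convexHull ℝ (Set.range u)) := by
          have := AffineSubspace.vadd_mem_of_mem_direction (Submodule.smul_mem _ δ₂ hdir) hsp2
          simpa [vadd_eq_add, add_comm] using this
        have hdist : dist ((x + l₀ • (x - w)) + δ₂ • (x - w)) (x + l₀ • (x - w)) < ε₂ := by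
          rw [dist_eq_norm, add_sub_cancel_left, norm_smul, Real.norm_eq_abs,
            abs_of_pos hδ₂pos, hδ₂def]
          rw [div_mul_eq_mul_div, div_lt_iff₀ (by positivity)]
          nlinarith [norm_nonneg (x - w)]
        have hball := hball2 _ hzsp hdist
        have heq : (x + l₀ • (x - w)) + δ₂ • (x - w) = x + (l₀ + δ₂) • (x - w) := by
          rw [add_smul]; abel
        rwa [heq] at hball
      have hmemΛ : l₀ + δ₂ ∈ Λ := ⟨by linarith, hz⟩
      have := le_csSup hΛbdd hmemΛ
      linarith
    obtain ⟨s, hsU, hcmem⟩ := exists_erase_of_notMem_intrinsicInterior hufin hl₀2 hnotri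
    obtain ⟨i₀, rfl⟩ := hsU
    have h1l : (0:ℝ) < 1 + l₀ := by linarith
    have h1lne : (1:ℝ) + l₀ ≠ 0 := ne_of_gt h1l
    have hseg2 : x ∈ segment ℝ w (x + l₀ • (x - w)) := by
      refine ⟨l₀ / (1 + l₀), 1 / (1 + l₀), div_nonneg hl₀pos.le h1l.le,
        div_nonneg zero_le_one h1l.le, by field_simp; ring, ?_⟩
      match_scalars <;> field_simp <;> ring
    refine goalLeft i₀ x ?_ hxB
    have hwmem : w ∈ convexHull ℝ (insert w (Set.range u \ {u i₀})) :=
      subset_convexHull ℝ _ (Set.mem_insert _ _)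
    have hcmem' : x + l₀ • (x - w) ∈ convexHull ℝ (insert w (Set.range u \ {u i₀})) :=
      convexHull_mono (Set.subset_insert _ _) hcmem
    exact (convex_convexHull ℝ _).segment_subset hwmem hcmem' hseg2
  · -- main case : x ≠ y
    have hyA : y ∈ convexHull ℝ (insert w (Set.range u)) :=
      convexHull_mono (Set.subset_insert w _) hyA₀
    obtain ⟨t, ht0, ⟨hmA, hmB⟩, hcase⟩ := ray_exit hwufin hvfin ⟨hxA, hxB⟩ ⟨hyA, hyB⟩ hxy
    set m : Fin n → ℝ := x + t • (x - y) with hmdef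
    have hmy : m ≠ y := by
      intro h
      apply hxy
      have h1 : (1 + t) • (x - y) = 0 := by
        rw [add_smul, one_smul]
        have h2 := congrArg (fun z => z - y) h
        simp only [hmdef, sub_self] at h2
        rw [← h2]; abel
      have h3 : x - y = 0 := by
        rcases smul_eq_zero.1 h1 with h4 | h4
        · exfalso; linarith
        · exact h4
      rw [← sub_eq_zero]; exact h3
    rcases hcase with hnA | hnB
    · obtain ⟨s, hsIns, hms⟩ := exists_erase_of_notMem_intrinsicInterior hwufin hmA hnA
      by_cases hsu : s ∈ Set.range u
      · obtain ⟨i₀, rfl⟩ := hsu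
        refine goalLeft i₀ m (convexHull_mono ?_ hms) hmB
        rintro e ⟨he1, he2⟩
        rcases Set.mem_insert_iff.1 he1 with rfl | heu
        · exact Set.mem_insert _ _
        · exact Set.mem_insert_of_mem _ ⟨heu, he2⟩
      · have hsw : s = w := by
          rcases Set.mem_insert_iff.1 hsIns with h | h
          · exact h
          · exact absurd h hsu
        have hmA₀ : m ∈ convexHull ℝ (Set.range u) := by
          refine convexHull_mono ?_ hms
          rintro e ⟨he1, he2⟩
          rcases Set.mem_insert_iff.1 he1 with rfl | heu
          · exact absurd (by rw [hsw]; exact rfl) he2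
          · exact heu
        obtain ⟨t', ht'0, ⟨hA₀', hB'⟩, hcase'⟩ :=
          ray_exit hufin hvfin ⟨hmA₀, hmB⟩ ⟨hyA₀, hyB⟩ hmy
        set m' : Fin n → ℝ := m + t' • (m - y) with hm'def
        rcases hcase' with hn1 | hn2
        · obtain ⟨s', hs'U, hm's⟩ := exists_erase_of_notMem_intrinsicInterior hufin hA₀' hn1
          obtain ⟨i₀, rfl⟩ := hs'U
          exact goalLeft i₀ m' (convexHull_mono (fun e he => Set.mem_insert_of_mem _ he) hm's) hB'
        · obtain ⟨s', hs'V, hm's⟩ := exists_erase_of_notMem_intrinsicInterior hvfin hB' hn2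
          obtain ⟨j₀, rfl⟩ := hs'V
          exact goalRight j₀ m' (convexHull_mono (Set.subset_insert _ _) hA₀') hm's
    · obtain ⟨s, hsV, hms⟩ := exists_erase_of_notMem_intrinsicInterior hvfin hmB hnB
      obtain ⟨j₀, rfl⟩ := hsV
      exact goalRight j₀ m hmA hms
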